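/- arXiv:2406.09723 — 2 statements merged into one kernel-verified Lean document; each statement's English description precedes it below -/
import Mathlib

section
/- Let $t \geq 2$ be an integer and define $F(x) = \frac{(1 + x^t)(1 - x)^2}{(1 + x)(1 - x^t)^2}$ for $x \in (0,1)$. If $t x^{t-1} \leq 1$ holds for all $x$ in an open subinterval $I \subseteq (0,1)$, then $F$ is strictly decreasing on $I$. -/
/-- On any open subinterval of `(0,1)` where `t x^(t-1) ≤ 1`, the function
`F(x) = (1+xᵗ)(1-x)² / ((1+x)(1-xᵗ)²)` is strictly decreasing. -/
theorem F_strictAntiOn (t : ℕ) (ht : 2 ≤ t) (a b : ℝ)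
    (hI : Set.Ioo a b ⊆ Set.Ioo (0 : ℝ) 1)
    (hcond : ∀ x ∈ Set.Ioo a b, (t : ℝ) * x ^ (t - 1) ≤ 1) :
    StrictAntiOn (fun x : ℝ => (1 + x ^ t) * (1 - x) ^ 2 / ((1 + x) * (1 - x ^ t) ^ 2))
      (Set.Ioo a b) := by
  have key : ∀ x ∈ Set.Ioo a b, (0:ℝ) < x ∧ x < 1 ∧ x ^ t < x := by
    intro x hx
    obtain ⟨hx0, hx1⟩ := hI hx
    refine ⟨hx0, hx1, ?_⟩
    have := pow_lt_pow_right_of_lt_one₀ hx0 hx1 (by omega : 1 < t)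
    simpa using this
  have hden : ∀ x ∈ Set.Ioo a b, (1 + x) * (1 - x ^ t) ^ 2 ≠ 0 := by
    intro x hx
    obtain ⟨hx0, hx1, hxt⟩ := key x hx
    have h1 : (0:ℝ) < 1 + x := by linarith
    have h2 : (0:ℝ) < 1 - x ^ t := by linarith
    positivity
  apply strictAntiOn_of_deriv_neg (convex_Ioo a b)
  · apply ContinuousOn.div
    · fun_prop
    · fun_prop
    · exact hden
  · intro x hx
    rw [interior_Ioo] at hx
    obtain ⟨hx0, hx1, hxt⟩ := key x hx
    have h1 : (0:ℝ) < 1 + x := by linarith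
    have h2 : (0:ℝ) < 1 - x ^ t := by linarith
    have hD0 : (1 + x) * (1 - x ^ t) ^ 2 ≠ 0 := hden x hx
    -- derivatives
    have hN : HasDerivAt (fun x : ℝ => (1 + x ^ t) * (1 - x) ^ 2)
        (((t:ℝ) * x ^ (t-1)) * (1 - x) ^ 2 + (1 + x ^ t) * (2 * (1 - x) ^ 1 * (-1))) x := by
      exact ((hasDerivAt_pow t x).const_add 1).mul
        (((hasDerivAt_id x).const_sub 1).pow 2)
    have hDd : HasDerivAt (fun x : ℝ => (1 + x) * (1 - x ^ t) ^ 2)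
        (1 * (1 - x ^ t) ^ 2 + (1 + x) * (2 * (1 - x ^ t) ^ 1 * (-((t:ℝ) * x ^ (t-1))))) x := by
      exact ((hasDerivAt_id x).const_add 1).mul
        (((hasDerivAt_pow t x).const_sub 1).pow 2)
    have hF : HasDerivAt (fun x : ℝ => (1 + x ^ t) * (1 - x) ^ 2 / ((1 + x) * (1 - x ^ t) ^ 2)) _ x :=
      hN.div hDd hD0
    rw [hF.deriv]
    apply div_neg_of_neg_of_pos
    · -- numerator negative
      set u := x ^ t with hu
      set s := (t:ℝ) * x ^ (t-1) with hs
      have hs1 : s ≤ 1 := hcond x hx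
      have hs0 : 0 < s := by
        have : (0:ℝ) < (t:ℝ) := by positivity
        positivity
      have hu0 : 0 < u := by positivity
      have hfac : (s * (1 - x) ^ 2 + (1 + u) * (2 * (1 - x) ^ 1 * (-1))) * ((1 + x) * (1 - u) ^ 2)
          - (1 + u) * (1 - x) ^ 2 * (1 * (1 - u) ^ 2 + (1 + x) * (2 * (1 - u) ^ 1 * (-s)))
          = (1 - x) * (1 - u) * (s * (1 - x^2) * (3 + u) - (1 - u^2) * (3 + x)) := by
        ring
      rw [hfac]
      have hinner : s * (1 - x^2) * (3 + u) - (1 - u^2) * (3 + x) < 0 := by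
        have h3 : (0:ℝ) < 1 - x^2 := by nlinarith
        have h4 : (0:ℝ) < 3 + u := by linarith
        have step1 : s * (1 - x^2) * (3 + u) ≤ (1 - x^2) * (3 + u) := by
          have h5 : 0 ≤ (1 - s) * ((1 - x^2) * (3 + u)) :=
            mul_nonneg (by linarith) (mul_pos h3 h4).le
          nlinarith
        have step2 : (1 - x^2) * (3 + u) < (1 - u^2) * (3 + x) := by
          have h6 : (u - x) * (3 * (u + x) + 1 + u * x) < 0 :=
            mul_neg_of_neg_of_pos (by linarith) (by nlinarith)
          nlinarith
        linarith
      have hpos : (0:ℝ) < (1 - x) * (1 - u) := by nlinarith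
      nlinarith
    · positivity
end

section
/- Fix an integer $t \geq 2$, $\sigma_1 > 0$, and define $V(\gamma) = \frac{t}{2\sigma_1}\cdot\frac{(1 + e^{-\gamma t})(1 - e^{-\gamma})^2}{(1 + e^{-\gamma})(1 - e^{-\gamma t})^2}$ for $\gamma > 0$. If $t e^{-\gamma(t-1)} \leq 1$ for all $\gamma$ in an interval $(\gamma_0, \gamma_1)$ with $0 < \gamma_0 < \gamma_1$, then $V$ is strictly increasing on $(\gamma_0, \gamma_1)$. -/
open Real Set

private lemma aux_pos (t : ℕ) (x y : ℝ) (hx0 : 0 < x) (hx1 : x < 1)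
    (hy0 : 0 < y) (hyx : y < x) (hty : (t : ℝ) * y ≤ x) :
    0 < (-((t:ℝ) * y) * (1 - x) ^ 2 + (1 + y) * (2 * (1 - x) * x)) * ((1 + x) * (1 - y) ^ 2)
      - (1 + y) * (1 - x) ^ 2 * (-x * (1 - y) ^ 2 + (1 + x) * (2 * (1 - y) * ((t:ℝ) * y))) := by
  have hy1 : y < 1 := hyx.trans hx1
  have hK : 0 < x * (1 - y ^ 2) * (3 + x) - (t:ℝ) * y * (1 - x ^ 2) * (3 + y) := by
    have hpos : 0 < (1 - x ^ 2) * (3 + y) :=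
      mul_pos (by nlinarith) (by linarith)
    have h1 : (t:ℝ) * y * (1 - x ^ 2) * (3 + y) ≤ x * (1 - x ^ 2) * (3 + y) := by
      calc (t:ℝ) * y * (1 - x ^ 2) * (3 + y) = ((t:ℝ) * y) * ((1 - x ^ 2) * (3 + y)) := by ring
        _ ≤ x * ((1 - x ^ 2) * (3 + y)) := mul_le_mul_of_nonneg_right hty hpos.le
        _ = x * (1 - x ^ 2) * (3 + y) := by ring
    have p1 : x * (1 - x ^ 2) * (3 + y) < x * (1 - y ^ 2) * (3 + y) := by
      apply mul_lt_mul_of_pos_right _ (by linarith)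
      apply mul_lt_mul_of_pos_left _ hx0
      nlinarith
    have p2 : x * (1 - y ^ 2) * (3 + y) < x * (1 - y ^ 2) * (3 + x) := by
      have hpos2 : 0 < x * (1 - y ^ 2) := mul_pos hx0 (by nlinarith)
      calc x * (1 - y ^ 2) * (3 + y) = (x * (1 - y ^ 2)) * (3 + y) := by ring
        _ < (x * (1 - y ^ 2)) * (3 + x) := mul_lt_mul_of_pos_left (by linarith) hpos2
        _ = x * (1 - y ^ 2) * (3 + x) := by ring
    linarith
  have hfac : (-((t:ℝ) * y) * (1 - x) ^ 2 + (1 + y) * (2 * (1 - x) * x)) * ((1 + x) * (1 - y) ^ 2)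
      - (1 + y) * (1 - x) ^ 2 * (-x * (1 - y) ^ 2 + (1 + x) * (2 * (1 - y) * ((t:ℝ) * y)))
      = (1 - x) * (1 - y) * (x * (1 - y ^ 2) * (3 + x) - (t:ℝ) * y * (1 - x ^ 2) * (3 + y)) := by
    ring
  rw [hfac]
  exact mul_pos (mul_pos (by linarith) (by linarith)) hK

/-- The adaptive learning rate variance
`V(γ) = t/(2σ₁) · (1+e^{-γt})(1-e^{-γ})² / ((1+e^{-γ})(1-e^{-γt})²)`
is strictly increasing on any interval `(γ₀, γ₁) ⊆ (0,∞)` on which `t e^{-γ(t-1)} ≤ 1`. -/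
theorem V_strictMonoOn (t : ℕ) (ht : 2 ≤ t) (σ₁ : ℝ) (hσ : 0 < σ₁)
    (γ₀ γ₁ : ℝ) (h₀ : 0 < γ₀) (h₀₁ : γ₀ < γ₁)
    (hcond : ∀ γ ∈ Set.Ioo γ₀ γ₁, (t : ℝ) * Real.exp (-γ * (t - 1)) ≤ 1) :
    StrictMonoOn (fun γ : ℝ =>
        (t : ℝ) / (2 * σ₁) *
          ((1 + Real.exp (-γ * t)) * (1 - Real.exp (-γ)) ^ 2 /
            ((1 + Real.exp (-γ)) * (1 - Real.exp (-γ * t)) ^ 2)))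
      (Set.Ioo γ₀ γ₁) := by
  have ht0 : (0:ℝ) < t := by positivity
  have hcpos : 0 < (t : ℝ) / (2 * σ₁) := by positivity
  have key : ∀ γ ∈ Set.Ioo γ₀ γ₁,
      ∃ d, HasDerivAt (fun γ : ℝ =>
        (t : ℝ) / (2 * σ₁) *
          ((1 + Real.exp (-γ * t)) * (1 - Real.exp (-γ)) ^ 2 /
            ((1 + Real.exp (-γ)) * (1 - Real.exp (-γ * t)) ^ 2))) d γ ∧ 0 < d := by
    intro γ hγ
    have hγ0 : 0 < γ := h₀.trans hγ.1
    have hx0 : 0 < Real.exp (-γ) := Real.exp_pos _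
    have hx1 : Real.exp (-γ) < 1 := by rw [Real.exp_lt_one_iff]; linarith
    have hy0 : 0 < Real.exp (-γ * t) := Real.exp_pos _
    have hypow : Real.exp (-γ * t) = Real.exp (-γ) ^ t := by
      rw [← Real.exp_nat_mul]; congr 1; ring
    have hyx : Real.exp (-γ * t) < Real.exp (-γ) := by
      rw [hypow]
      calc Real.exp (-γ) ^ t ≤ Real.exp (-γ) ^ 2 :=
            pow_le_pow_of_le_one hx0.le hx1.le ht
        _ < Real.exp (-γ) := by nlinarith
    have hy1 : Real.exp (-γ * t) < 1 := hyx.trans hx1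
    have hty : (t:ℝ) * Real.exp (-γ * t) ≤ Real.exp (-γ) := by
      have h1 := hcond γ hγ
      have h2 : Real.exp (-γ * ((t:ℝ) - 1)) * Real.exp (-γ) = Real.exp (-γ * t) := by
        rw [← Real.exp_add]; congr 1; ring
      calc (t:ℝ) * Real.exp (-γ * t)
          = ((t:ℝ) * Real.exp (-γ * ((t:ℝ) - 1))) * Real.exp (-γ) := by rw [← h2]; ring
        _ ≤ 1 * Real.exp (-γ) := mul_le_mul_of_nonneg_right h1 hx0.le
        _ = Real.exp (-γ) := one_mul _
    -- derivatives
    have hdx : HasDerivAt (fun γ : ℝ => Real.exp (-γ)) (-Real.exp (-γ)) γ := by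
      have h := ((hasDerivAt_id γ).neg).exp
      simp only [Pi.neg_apply, id_eq] at h
      convert h using 1
      ring
    have hdy : HasDerivAt (fun γ : ℝ => Real.exp (-γ * t))
        (-((t:ℝ) * Real.exp (-γ * t))) γ := by
      have h := (((hasDerivAt_id γ).neg).mul_const (t:ℝ)).exp
      simp only [Pi.neg_apply, id_eq] at h
      convert h using 1
      ring
    have hN : HasDerivAt (fun γ : ℝ => (1 + Real.exp (-γ * t)) * (1 - Real.exp (-γ)) ^ 2)
        (-((t:ℝ) * Real.exp (-γ * t)) * (1 - Real.exp (-γ)) ^ 2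
          + (1 + Real.exp (-γ * t)) * (2 * (1 - Real.exp (-γ)) * Real.exp (-γ))) γ := by
      have h1 : HasDerivAt (fun γ : ℝ => 1 + Real.exp (-γ * t))
          (-((t:ℝ) * Real.exp (-γ * t))) γ := hdy.const_add 1
      have h2 := (hdx.const_sub 1).fun_pow 2
      have h := h1.fun_mul h2
      refine h.congr_deriv ?_
      norm_num
    have hD : HasDerivAt (fun γ : ℝ => (1 + Real.exp (-γ)) * (1 - Real.exp (-γ * t)) ^ 2)
        (-Real.exp (-γ) * (1 - Real.exp (-γ * t)) ^ 2
          + (1 + Real.exp (-γ)) * (2 * (1 - Real.exp (-γ * t)) * ((t:ℝ) * Real.exp (-γ * t)))) γ := by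
      have h1 : HasDerivAt (fun γ : ℝ => 1 + Real.exp (-γ)) (-Real.exp (-γ)) γ := hdx.const_add 1
      have h2 := (hdy.const_sub 1).fun_pow 2
      have h := h1.fun_mul h2
      refine h.congr_deriv ?_
      norm_num
    have hDpos : 0 < (1 + Real.exp (-γ)) * (1 - Real.exp (-γ * t)) ^ 2 :=
      mul_pos (by linarith) (pow_pos (by linarith) 2)
    have hdiv := (hN.div hD hDpos.ne').const_mul ((t : ℝ) / (2 * σ₁))
    refine ⟨_, hdiv, ?_⟩
    apply mul_pos hcpos
    apply div_pos _ (pow_pos hDpos 2)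
    have := aux_pos t (Real.exp (-γ)) (Real.exp (-γ * t)) hx0 hx1 hy0 hyx hty
    nlinarith [this]
  apply strictMonoOn_of_deriv_pos (convex_Ioo γ₀ γ₁)
  · intro γ hγ
    obtain ⟨d, hd, _⟩ := key γ hγ
    exact hd.continuousAt.continuousWithinAt
  · intro γ hγ
    rw [interior_Ioo] at hγ
    obtain ⟨d, hd, hdpos⟩ := key γ hγ
    rw [hd.deriv]; exact hdpos
end
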